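/- For every n ∈ ℕ₀ and every x ∈ ℝ^d, the two graph-sum representations of the coefficient p_n coincide: Σ_{G ∈ 𝒢_n} π_n(G) I_n(G,x) = Σ_{H ∈ 𝒢_n} κ_n(H) J_n(H,x). -/

import Mathlib

open MeasureTheory Finset
open scoped ENNReal Classical

noncomputable section

/-- The interior vertices `{1,…,n}` of the vertex set `{0,1,…,n+1}` (as `Fin (n+2)`). -/
def interiorVerts (n : ℕ) : Finset (Fin (n + 2)) :=
  Finset.univ.filter fun v => v ≠ 0 ∧ v ≠ Fin.last (n + 1)

/-- `ConnIn G a b S` : there is a path from `a` to `b` in `G` using only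
vertices in `S ∪ {a, b}`. -/
def ConnIn {k : ℕ} (G : SimpleGraph (Fin k)) (a b : Fin k) (S : Set (Fin k)) : Prop :=
  ∃ w : G.Walk a b, ∀ v ∈ w.support, v = a ∨ v = b ∨ v ∈ S

/-- `π_n(G) = Σ_{I ⊆ [n]} (-1)^{n-|I|} 1{0 ↔ n+1 in G|I}`. -/
def piFun (n : ℕ) (G : SimpleGraph (Fin (n + 2))) : ℤ :=
  ∑ I ∈ (interiorVerts n).powerset,
    (-1 : ℤ) ^ (n - I.card) *
      (if ConnIn G 0 (Fin.last (n + 1)) ↑I then 1 else 0)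

/-- The number of edges of `G`, counted via ordered pairs `i < j`. -/
def edgeCount {k : ℕ} (G : SimpleGraph (Fin k)) : ℕ :=
  (Finset.univ.filter fun p : Fin k × Fin k => p.1 < p.2 ∧ G.Adj p.1 p.2).card

/-- `κ_n(H) = Σ_{G ∈ 𝒢_n, E(G) ⊆ E(H)} (-1)^{|E(H)|-|E(G)|} π_n(G)`. -/
def kappaFun (n : ℕ) (H : SimpleGraph (Fin (n + 2))) : ℤ :=
  ∑ G ∈ Finset.univ.filter
      (fun G : SimpleGraph (Fin (n + 2)) => G.Connected ∧ G ≤ H),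
    (-1 : ℤ) ^ (edgeCount H - edgeCount G) * piFun n G

/-- The point configuration `x₀ = 0`, `x₁,…,x_n = xs`, `x_{n+1} = x`. -/
def pts {d n : ℕ} (x : EuclideanSpace ℝ (Fin d)) (xs : Fin n → EuclideanSpace ℝ (Fin d)) :
    Fin (n + 2) → EuclideanSpace ℝ (Fin d) :=
  Fin.cons 0 (Fin.snoc xs x)

/-- `∏_{{i,j} ∈ E(G)} φ(y_i - y_j)`, product over ordered pairs `i < j`. -/
def edgeProd {d k : ℕ} (φ : EuclideanSpace ℝ (Fin d) → ℝ)
    (G : SimpleGraph (Fin k)) (y : Fin k → EuclideanSpace ℝ (Fin d)) : ℝ :=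
  ∏ p ∈ Finset.univ.filter (fun p : Fin k × Fin k => p.1 < p.2 ∧ G.Adj p.1 p.2),
    φ (y p.1 - y p.2)

/-- `J_n(G,x) = ∫ ∏_{{i,j} ∈ E(G)} φ(x_i - x_j) d(x₁,…,x_n)` with `x₀ = 0`, `x_{n+1} = x`. -/
def Jfun {d : ℕ} (φ : EuclideanSpace ℝ (Fin d) → ℝ) (n : ℕ)
    (G : SimpleGraph (Fin (n + 2))) (x : EuclideanSpace ℝ (Fin d)) : ℝ :=
  ∫ xs : Fin n → EuclideanSpace ℝ (Fin d), edgeProd φ G (pts x xs)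

/-- `I_n(G,x) = ∫ ∏_{{i,j} ∈ E(G)} φ(x_i-x_j) ∏_{{i,j} ∉ E(G)} (1 - φ(x_i-x_j)) d(x₁,…,x_n)`. -/
def Ifun {d : ℕ} (φ : EuclideanSpace ℝ (Fin d) → ℝ) (n : ℕ)
    (G : SimpleGraph (Fin (n + 2))) (x : EuclideanSpace ℝ (Fin d)) : ℝ :=
  ∫ xs : Fin n → EuclideanSpace ℝ (Fin d),
    edgeProd φ G (pts x xs) *
      ∏ p ∈ Finset.univ.filter
          (fun p : Fin (n + 2) × Fin (n + 2) => p.1 < p.2 ∧ ¬ G.Adj p.1 p.2),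
        (1 - φ (pts x xs p.1 - pts x xs p.2))

/-- `p_n(x) = (1/n!) Σ_{H ∈ 𝒢_n} κ_n(H) J_n(H,x)`. -/
def pFun {d : ℕ} (φ : EuclideanSpace ℝ (Fin d) → ℝ) (n : ℕ)
    (x : EuclideanSpace ℝ (Fin d)) : ℝ :=
  (Nat.factorial n : ℝ)⁻¹ *
    ∑ H ∈ Finset.univ.filter (fun H : SimpleGraph (Fin (n + 2)) => H.Connected),
      (kappaFun n H : ℝ) * Jfun φ n H x


namespace PKAux

variable {k : ℕ}

def pairsOf (G : SimpleGraph (Fin k)) : Finset (Fin k × Fin k) :=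
  Finset.univ.filter fun p => p.1 < p.2 ∧ G.Adj p.1 p.2

lemma mem_pairsOf {G : SimpleGraph (Fin k)} {p : Fin k × Fin k} :
    p ∈ pairsOf G ↔ p.1 < p.2 ∧ G.Adj p.1 p.2 := by simp [pairsOf]

lemma pairsOf_mono {G H : SimpleGraph (Fin k)} (h : G ≤ H) : pairsOf G ⊆ pairsOf H := by
  intro p hp
  rw [mem_pairsOf] at *
  exact ⟨hp.1, h hp.2⟩

lemma le_of_pairsOf_subset {G H : SimpleGraph (Fin k)} (h : pairsOf G ⊆ pairsOf H) : G ≤ H := by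
  intro a b hab
  rcases lt_trichotomy a b with hlt | heq | hgt
  · exact (mem_pairsOf.mp (h ((mem_pairsOf (p := (a, b))).mpr ⟨hlt, hab⟩))).2
  · exact absurd heq (G.ne_of_adj hab)
  · exact ((mem_pairsOf.mp (h ((mem_pairsOf (p := (b, a))).mpr ⟨hgt, hab.symm⟩))).2).symm

def ofPairs (s : Finset (Fin k × Fin k)) : SimpleGraph (Fin k) where
  Adj a b := a ≠ b ∧ ((a, b) ∈ s ∨ (b, a) ∈ s)
  symm := by
    constructor
    intro a b h
    exact ⟨h.1.symm, h.2.symm⟩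
  loopless := by
    constructor
    intro a h
    exact h.1 rfl

lemma ofPairs_adj {s : Finset (Fin k × Fin k)} {a b : Fin k} :
    (ofPairs s).Adj a b ↔ a ≠ b ∧ ((a, b) ∈ s ∨ (b, a) ∈ s) := Iff.rfl

lemma pairsOf_ofPairs {s : Finset (Fin k × Fin k)} (hs : ∀ p ∈ s, p.1 < p.2) :
    pairsOf (ofPairs s) = s := by
  ext p
  rw [mem_pairsOf, ofPairs_adj]
  constructor
  · rintro ⟨hlt, -, (h | h)⟩
    · exact h
    · exact absurd (hs _ h) (lt_asymm hlt)
  · intro hp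
    exact ⟨hs _ hp, (hs _ hp).ne, Or.inl hp⟩

lemma ofPairs_pairsOf (G : SimpleGraph (Fin k)) : ofPairs (pairsOf G) = G := by
  ext a b
  rw [ofPairs_adj, mem_pairsOf, mem_pairsOf]
  constructor
  · rintro ⟨hne, (⟨-, h⟩ | ⟨-, h⟩)⟩
    · exact h
    · exact h.symm
  · intro h
    rcases lt_or_gt_of_ne (G.ne_of_adj h) with hlt | hgt
    · exact ⟨G.ne_of_adj h, Or.inl ⟨hlt, h⟩⟩
    · exact ⟨G.ne_of_adj h, Or.inr ⟨hgt, h.symm⟩⟩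

lemma prod_one_sub_expand (G : SimpleGraph (Fin k)) (f : Fin k × Fin k → ℝ) :
    (∏ p ∈ pairsOf G, f p) *
      ∏ p ∈ Finset.univ.filter (fun p : Fin k × Fin k => p.1 < p.2 ∧ ¬ G.Adj p.1 p.2), (1 - f p) =
    ∑ H ∈ Finset.univ.filter (fun H : SimpleGraph (Fin k) => G ≤ H),
      (-1 : ℝ) ^ ((pairsOf H).card - (pairsOf G).card) * ∏ p ∈ pairsOf H, f p := by
  classical
  set N := Finset.univ.filter (fun p : Fin k × Fin k => p.1 < p.2 ∧ ¬ G.Adj p.1 p.2) with hN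
  have hdisj : ∀ t ∈ N.powerset, Disjoint (pairsOf G) t := by
    intro t ht
    rw [Finset.disjoint_left]
    intro p hpG hpt
    have h2 := (Finset.mem_filter.mp ((Finset.mem_powerset.mp ht) hpt)).2.2
    exact h2 (mem_pairsOf.mp hpG).2
  have expand : ∏ p ∈ N, (1 - f p) = ∑ t ∈ N.powerset, (-1 : ℝ) ^ t.card * ∏ p ∈ t, f p := by
    have h1 : ∀ p ∈ N, (1 : ℝ) - f p = (fun q => -f q) p + (fun _ => (1 : ℝ)) p := by
      intro p _; ring
    rw [Finset.prod_congr rfl h1, Finset.prod_add]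
    refine Finset.sum_congr rfl fun t _ => ?_
    rw [Finset.prod_const_one, mul_one]
    calc ∏ p ∈ t, -f p = ∏ p ∈ t, (-1 : ℝ) * f p := by
          refine Finset.prod_congr rfl fun p _ => ?_; ring
      _ = (-1 : ℝ) ^ t.card * ∏ p ∈ t, f p := by
          rw [Finset.prod_mul_distrib, Finset.prod_const]
  rw [expand, Finset.mul_sum]
  have step : ∀ t ∈ N.powerset,
      (∏ p ∈ pairsOf G, f p) * ((-1 : ℝ) ^ t.card * ∏ p ∈ t, f p) =
      (-1 : ℝ) ^ t.card * ∏ p ∈ pairsOf G ∪ t, f p := by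
    intro t ht
    rw [Finset.prod_union (hdisj t ht)]
    ring
  rw [Finset.sum_congr rfl step]
  -- bijection t ↦ ofPairs (pairsOf G ∪ t)
  have hlt_all : ∀ t ∈ N.powerset, ∀ p ∈ pairsOf G ∪ t, p.1 < p.2 := by
    intro t ht p hp
    rcases Finset.mem_union.mp hp with h | h
    · exact (mem_pairsOf.mp h).1
    · exact (Finset.mem_filter.mp ((Finset.mem_powerset.mp ht) h)).2.1
  have hPO : ∀ t ∈ N.powerset, pairsOf (ofPairs (pairsOf G ∪ t)) = pairsOf G ∪ t :=
    fun t ht => pairsOf_ofPairs (hlt_all t ht)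
  refine Finset.sum_nbij' (fun t => ofPairs (pairsOf G ∪ t))
    (fun H => pairsOf H \ pairsOf G) ?_ ?_ ?_ ?_ ?_
  · intro t ht
    rw [Finset.mem_filter]
    refine ⟨Finset.mem_univ _, le_of_pairsOf_subset ?_⟩
    rw [hPO t ht]
    exact Finset.subset_union_left
  · intro H hH
    have hGH : G ≤ H := (Finset.mem_filter.mp hH).2
    rw [Finset.mem_powerset]
    intro p hp
    rw [Finset.mem_sdiff] at hp
    have h1 := mem_pairsOf.mp hp.1
    rw [hN, Finset.mem_filter]
    refine ⟨Finset.mem_univ _, h1.1, fun hadj => hp.2 (mem_pairsOf.mpr ⟨h1.1, hadj⟩)⟩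
  · intro t ht
    rw [hPO t ht, Finset.union_sdiff_cancel_left (hdisj t ht)]
  · intro H hH
    have hGH : G ≤ H := (Finset.mem_filter.mp hH).2
    rw [Finset.union_sdiff_of_subset (pairsOf_mono hGH), ofPairs_pairsOf]
  · intro t ht
    rw [hPO t ht, Finset.card_union_of_disjoint (hdisj t ht), Nat.add_sub_cancel_left]

end PKAux

namespace PKAux

variable {d : ℕ}

lemma pts_zero {n : ℕ} (x : EuclideanSpace ℝ (Fin d)) (xs : Fin n → EuclideanSpace ℝ (Fin d)) :
    pts x xs 0 = 0 := rfl

def vmap {n : ℕ} (i : Fin n) : Fin (n + 2) := (i.castSucc).succ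

lemma pts_last {n : ℕ} (x : EuclideanSpace ℝ (Fin d)) (xs : Fin n → EuclideanSpace ℝ (Fin d)) :
    pts x xs (Fin.last (n + 1)) = x := by
  have h : Fin.last (n + 1) = (Fin.last n).succ := (Fin.succ_last n).symm
  rw [h]
  unfold pts
  rw [Fin.cons_succ, Fin.snoc_last]

lemma pts_vmap {n : ℕ} (x : EuclideanSpace ℝ (Fin d)) (xs : Fin n → EuclideanSpace ℝ (Fin d))
    (i : Fin n) : pts x xs (vmap i) = xs i := by
  simp [pts, vmap, Fin.cons_succ, Fin.snoc_castSucc]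

lemma vmap_injective {n : ℕ} : Function.Injective (vmap (n := n)) := by
  intro i j h
  exact Fin.castSucc_injective _ (Fin.succ_injective _ h)

lemma vmap_ne_zero {n : ℕ} (i : Fin n) : vmap i ≠ 0 := Fin.succ_ne_zero _

lemma pts_update_eq {n : ℕ} (x : EuclideanSpace ℝ (Fin d)) (xs : Fin n → EuclideanSpace ℝ (Fin d))
    (i : Fin n) (xi : EuclideanSpace ℝ (Fin d)) (kk : Fin (n + 2)) (h : kk ≠ vmap i) :
    pts x (Function.update xs i xi) kk = pts x xs kk := by
  induction kk using Fin.cases with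
  | zero => rfl
  | succ j =>
    induction j using Fin.lastCases with
    | last =>
      show pts x (Function.update xs i xi) (Fin.last (n + 1)) = pts x xs (Fin.last (n + 1))
      rw [pts_last, pts_last]
    | cast j =>
      have hji : j ≠ i := fun hji => h (by rw [hji]; rfl)
      show pts x (Function.update xs i xi) (vmap j) = pts x xs (vmap j)
      rw [pts_vmap, pts_vmap, Function.update_of_ne hji]

lemma measurable_pts_apply {n : ℕ} (x : EuclideanSpace ℝ (Fin d)) (kk : Fin (n + 2)) :
    Measurable (fun xs : Fin n → EuclideanSpace ℝ (Fin d) => pts x xs kk) := by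
  induction kk using Fin.cases with
  | zero => exact measurable_const
  | succ j =>
    induction j using Fin.lastCases with
    | last =>
      show Measurable fun xs : Fin n → EuclideanSpace ℝ (Fin d) => pts x xs (Fin.last (n + 1))
      simp only [pts_last]
      exact measurable_const
    | cast j =>
      show Measurable fun xs : Fin n → EuclideanSpace ℝ (Fin d) => pts x xs (vmap j)
      simp only [pts_vmap]
      exact measurable_pi_apply j

lemma measurable_edgeProd_pts {n : ℕ} (φ : EuclideanSpace ℝ (Fin d) → ℝ) (hφ : Measurable φ)
    (H : SimpleGraph (Fin (n + 2))) (x : EuclideanSpace ℝ (Fin d)) :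
    Measurable fun xs : Fin n → EuclideanSpace ℝ (Fin d) => edgeProd φ H (pts x xs) := by
  unfold edgeProd
  exact Finset.measurable_prod _ fun p _ =>
    hφ.comp ((measurable_pts_apply x p.1).sub (measurable_pts_apply x p.2))

end PKAux

namespace PKAux

variable {d : ℕ}

lemma exists_parent {n : ℕ} {H : SimpleGraph (Fin (n + 2))} (hH : H.Connected) (w : Fin (n + 2))
    (hw : w ≠ 0) : ∃ u : Fin (n + 2), H.Adj u w ∧ H.dist 0 u < H.dist 0 w := by
  obtain ⟨p, hp⟩ := hH.exists_walk_length_eq_dist 0 w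
  obtain ⟨u, hadj, q, hq⟩ := SimpleGraph.Walk.exists_eq_cons_of_ne hw p.reverse
  refine ⟨u, hadj.symm, ?_⟩
  have h1 : p.reverse.length = q.length + 1 := by rw [hq, SimpleGraph.Walk.length_cons]
  rw [SimpleGraph.Walk.length_reverse, hp] at h1
  have h2 : H.dist 0 u ≤ q.length := by
    rw [SimpleGraph.dist_comm]
    exact SimpleGraph.dist_le q
  omega

lemma integrable_edgeProd_pts {n : ℕ} (φ : EuclideanSpace ℝ (Fin d) → ℝ)
    (hm : Measurable φ) (h0 : ∀ y, 0 ≤ φ y) (h1 : ∀ y, φ y ≤ 1)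
    (hsymm : ∀ y, φ (-y) = φ y) (hint : Integrable φ)
    {H : SimpleGraph (Fin (n + 2))} (hH : H.Connected) (x : EuclideanSpace ℝ (Fin d)) :
    Integrable (fun xs : Fin n → EuclideanSpace ℝ (Fin d) => edgeProd φ H (pts x xs)) := by
  classical
  set m : ℝ≥0∞ := ∫⁻ z, ENNReal.ofReal (φ z) with hmdef
  have hmne : m ≠ ⊤ := by
    have h2 := hint.2
    rw [hasFiniteIntegral_iff_ofReal (Filter.Eventually.of_forall h0)] at h2
    exact h2.ne
  have key : ∀ i : Fin n, ∃ u : Fin (n + 2), H.Adj u (vmap i) ∧ H.dist 0 u < H.dist 0 (vmap i) :=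
    fun i => exists_parent hH (vmap i) (vmap_ne_zero i)
  choose par hadj hplt using key
  have hcross : ∀ i j : Fin n, par i = vmap j → H.dist 0 (vmap j) < H.dist 0 (vmap i) := by
    intro i j h
    rw [← h]; exact hplt i
  have hpar_ne : ∀ i : Fin n, par i ≠ vmap i := fun i h => lt_irrefl _ (hcross i i h)
  set F : Fin n → (Fin n → EuclideanSpace ℝ (Fin d)) → ℝ≥0∞ :=
    fun i xs => ENNReal.ofReal (φ (xs i - pts x xs (par i))) with hF
  have hFmeas : ∀ i, Measurable (F i) := fun i =>
    ENNReal.measurable_ofReal.comp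
      (hm.comp ((measurable_pi_apply i).sub (measurable_pts_apply x (par i))))
  have hprodmeas : ∀ S : Finset (Fin n), Measurable fun xs => ∏ i ∈ S, F i xs :=
    fun S => Finset.measurable_prod _ fun i _ => hFmeas i
  have main : ∀ (N : ℕ) (S : Finset (Fin n)), S.card = N → ∀ xs,
      (∫⋯∫⁻_S, (fun ys => ∏ i ∈ S, F i ys)) xs ≤ m ^ N := by
    intro N
    induction N with
    | zero =>
      intro S hS xs
      rw [Finset.card_eq_zero] at hS
      subst hS
      simp
    | succ N ih =>
      intro S hS xs
      have hSne : S.Nonempty := Finset.card_pos.mp (by omega)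
      obtain ⟨i, hiS, hmax⟩ := Finset.exists_max_image S (fun j => H.dist 0 (vmap j)) hSne
      have hnotin : i ∉ S.erase i := Finset.notMem_erase i S
      have hcards : (S.erase i).card = N := by
        rw [Finset.card_erase_of_mem hiS, hS]
        omega
      have hmax' : ∀ j ∈ S.erase i, par j ≠ vmap i := by
        intro j hj hpj
        have ha := hcross j i hpj
        have hb := hmax j (Finset.mem_of_mem_erase hj)
        omega
      rw [lmarginal_erase' _ (hprodmeas S) hiS]
      have inner : ∀ ys : Fin n → EuclideanSpace ℝ (Fin d),
          (∫⁻ xi, (∏ j ∈ S, F j (Function.update ys i xi))) =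
          m * ∏ j ∈ S.erase i, F j ys := by
        intro ys
        have hsplit : ∀ xi, (∏ j ∈ S, F j (Function.update ys i xi)) =
            ENNReal.ofReal (φ (xi - pts x ys (par i))) * ∏ j ∈ S.erase i, F j ys := by
          intro xi
          rw [← Finset.mul_prod_erase S _ hiS]
          congr 1
          · simp only [hF]
            rw [Function.update_self, pts_update_eq x ys i xi (par i) (hpar_ne i)]
          · refine Finset.prod_congr rfl fun j hj => ?_
            simp only [hF]
            rw [Function.update_of_ne (Finset.ne_of_mem_erase hj),
              pts_update_eq x ys i xi (par j) (hmax' j hj)]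
        simp_rw [hsplit]
        have hmeasf : Measurable fun xi : EuclideanSpace ℝ (Fin d) =>
            ENNReal.ofReal (φ (xi - pts x ys (par i))) := by
          apply ENNReal.measurable_ofReal.comp
          exact hm.comp (measurable_id.sub measurable_const)
        rw [lintegral_mul_const _ hmeasf,
          lintegral_sub_right_eq_self (fun z => ENNReal.ofReal (φ z)) (pts x ys (par i))]
      have hle : (fun ys => ∫⁻ xi, (∏ j ∈ S, F j (Function.update ys i xi))) ≤
          fun ys => m * ∏ j ∈ S.erase i, F j ys := fun ys => le_of_eq (inner ys)
      refine le_trans (lmarginal_mono hle xs) ?_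
      have hconst : (∫⋯∫⁻_(S.erase i), fun ys => m * ∏ j ∈ S.erase i, F j ys) xs
          = m * (∫⋯∫⁻_(S.erase i), fun ys => ∏ j ∈ S.erase i, F j ys) xs := by
        simp only [lmarginal]
        exact lintegral_const_mul' _ _ hmne
      rw [hconst]
      calc m * (∫⋯∫⁻_(S.erase i), fun ys => ∏ j ∈ S.erase i, F j ys) xs
          ≤ m * m ^ N := mul_le_mul_right (ih _ hcards xs) m
        _ = m ^ (N + 1) := by rw [pow_succ]; ring
  constructor
  · exact (measurable_edgeProd_pts φ hm H x).aestronglyMeasurable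
  · rw [hasFiniteIntegral_iff_norm]
    have hbound : ∀ xs : Fin n → EuclideanSpace ℝ (Fin d),
        ENNReal.ofReal ‖edgeProd φ H (pts x xs)‖ ≤ ∏ i : Fin n, F i xs := by
      intro xs
      set q : Fin n → Fin (n + 2) × Fin (n + 2) := fun i =>
        if par i < vmap i then (par i, vmap i) else (vmap i, par i) with hq
      have hqmem : ∀ i, q i ∈ pairsOf H := by
        intro i
        simp only [hq]
        by_cases hlt : par i < vmap i
        · rw [if_pos hlt]; exact mem_pairsOf.mpr ⟨hlt, hadj i⟩
        · rw [if_neg hlt]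
          have hgt : vmap i < par i := lt_of_le_of_ne (not_lt.mp hlt) (Ne.symm (hpar_ne i))
          exact mem_pairsOf.mpr ⟨hgt, (hadj i).symm⟩
      have hqinj : Function.Injective q := by
        intro i j hij
        simp only [hq] at hij
        have hcases : (par i = par j ∧ vmap i = vmap j) ∨ (par i = vmap j ∧ vmap i = par j) := by
          by_cases hi : par i < vmap i <;> by_cases hj : par j < vmap j <;>
            simp only [if_pos, if_neg, hi, hj, if_true, if_false, Prod.mk.injEq] at hij <;> tauto
        rcases hcases with ⟨-, h⟩ | ⟨h1, h2⟩
        · exact vmap_injective h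
        · exfalso
          have ha := hcross i j h1
          have hb := hcross j i h2.symm
          omega
      have hq1 : ∀ i, φ (pts x xs (q i).1 - pts x xs (q i).2) = φ (xs i - pts x xs (par i)) := by
        intro i
        simp only [hq]
        by_cases hlt : par i < vmap i
        · rw [if_pos hlt]
          show φ (pts x xs (par i) - pts x xs (vmap i)) = _
          rw [pts_vmap, ← neg_sub (xs i) (pts x xs (par i)), hsymm]
        · rw [if_neg hlt]
          show φ (pts x xs (vmap i) - pts x xs (par i)) = _
          rw [pts_vmap]
      have himg : Finset.image q Finset.univ ⊆ pairsOf H := by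
        intro p hp
        obtain ⟨i, -, rfl⟩ := Finset.mem_image.mp hp
        exact hqmem i
      have hnn : (0:ℝ) ≤ edgeProd φ H (pts x xs) := Finset.prod_nonneg fun p _ => h0 _
      have step1 : edgeProd φ H (pts x xs) ≤ ∏ i : Fin n, φ (xs i - pts x xs (par i)) := by
        have hEP : edgeProd φ H (pts x xs)
            = ∏ p ∈ pairsOf H, φ (pts x xs p.1 - pts x xs p.2) := rfl
        rw [hEP, ← Finset.prod_sdiff himg]
        have hA : ∏ p ∈ pairsOf H \ Finset.image q Finset.univ,
            φ (pts x xs p.1 - pts x xs p.2) ≤ 1 :=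
          Finset.prod_le_one (fun p _ => h0 _) (fun p _ => h1 _)
        have hB : (0:ℝ) ≤ ∏ p ∈ Finset.image q Finset.univ, φ (pts x xs p.1 - pts x xs p.2) :=
          Finset.prod_nonneg fun p _ => h0 _
        calc (∏ p ∈ pairsOf H \ Finset.image q Finset.univ, φ (pts x xs p.1 - pts x xs p.2)) *
              ∏ p ∈ Finset.image q Finset.univ, φ (pts x xs p.1 - pts x xs p.2)
            ≤ 1 * ∏ p ∈ Finset.image q Finset.univ, φ (pts x xs p.1 - pts x xs p.2) :=
              mul_le_mul_of_nonneg_right hA hB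
          _ = ∏ p ∈ Finset.image q Finset.univ, φ (pts x xs p.1 - pts x xs p.2) := one_mul _
          _ = ∏ i : Fin n, φ (pts x xs (q i).1 - pts x xs (q i).2) :=
              Finset.prod_image (fun a _ b _ h => hqinj h)
          _ = ∏ i : Fin n, φ (xs i - pts x xs (par i)) := Finset.prod_congr rfl fun i _ => hq1 i
      calc ENNReal.ofReal ‖edgeProd φ H (pts x xs)‖
          = ENNReal.ofReal (edgeProd φ H (pts x xs)) := by rw [Real.norm_of_nonneg hnn]
        _ ≤ ENNReal.ofReal (∏ i : Fin n, φ (xs i - pts x xs (par i))) :=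
            ENNReal.ofReal_le_ofReal step1
        _ = ∏ i : Fin n, F i xs := ENNReal.ofReal_prod_of_nonneg (fun i _ => h0 _)
    calc ∫⁻ xs, ENNReal.ofReal ‖edgeProd φ H (pts x xs)‖
        ≤ ∫⁻ xs, ∏ i : Fin n, F i xs := lintegral_mono hbound
      _ = (∫⋯∫⁻_Finset.univ, (fun ys => ∏ i ∈ Finset.univ, F i ys)) (fun _ => 0) := by
          rw [← lintegral_eq_lmarginal_univ (fun _ => (0 : EuclideanSpace ℝ (Fin d))), ← volume_pi]
      _ ≤ m ^ n := by simpa using main n Finset.univ (by simp) (fun _ => 0)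
      _ < ⊤ := ENNReal.pow_lt_top (lt_top_iff_ne_top.mpr hmne)

end PKAux

namespace PKAux

lemma Ifun_eq_sum {d : ℕ} (φ : EuclideanSpace ℝ (Fin d) → ℝ)
    (hm : Measurable φ) (h0 : ∀ y, 0 ≤ φ y) (h1 : ∀ y, φ y ≤ 1)
    (hsymm : ∀ y, φ (-y) = φ y) (hint : Integrable φ)
    (n : ℕ) (G : SimpleGraph (Fin (n + 2))) (hG : G.Connected) (x : EuclideanSpace ℝ (Fin d)) :
    Ifun φ n G x = ∑ H ∈ Finset.univ.filter (fun H : SimpleGraph (Fin (n + 2)) => G ≤ H),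
      (-1 : ℝ) ^ (edgeCount H - edgeCount G) * Jfun φ n H x := by
  have hpt : ∀ xs : Fin n → EuclideanSpace ℝ (Fin d),
      edgeProd φ G (pts x xs) *
        ∏ p ∈ Finset.univ.filter
            (fun p : Fin (n + 2) × Fin (n + 2) => p.1 < p.2 ∧ ¬ G.Adj p.1 p.2),
          (1 - φ (pts x xs p.1 - pts x xs p.2)) =
      ∑ H ∈ Finset.univ.filter (fun H : SimpleGraph (Fin (n + 2)) => G ≤ H),
        (-1 : ℝ) ^ (edgeCount H - edgeCount G) * edgeProd φ H (pts x xs) := by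
    intro xs
    exact prod_one_sub_expand G (fun p => φ (pts x xs p.1 - pts x xs p.2))
  unfold Ifun
  simp only [hpt]
  rw [integral_finset_sum _ (fun H hH => ?_)]
  · exact Finset.sum_congr rfl fun H _ => integral_const_mul _ _
  · have hle : G ≤ H := (Finset.mem_filter.mp hH).2
    exact (integrable_edgeProd_pts φ hm h0 h1 hsymm hint (hG.mono hle) x).const_mul _

end PKAux

/-- The two graph-sum representations of the coefficient `p_n` coincide:
`Σ_{G ∈ 𝒢_n} π_n(G) I_n(G,x) = Σ_{H ∈ 𝒢_n} κ_n(H) J_n(H,x)`. -/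
theorem pi_I_eq_kappa_J
    {d : ℕ} (hd : 1 ≤ d) (φ : EuclideanSpace ℝ (Fin d) → ℝ)
    (hφmeas : Measurable φ) (hφrange : ∀ x, φ x ∈ Set.Icc (0 : ℝ) 1)
    (hφsymm : ∀ x, φ (-x) = φ x)
    (hφint : Integrable φ) (hφpos : 0 < ∫ x, φ x)
    (n : ℕ) (x : EuclideanSpace ℝ (Fin d)) :
    (∑ G ∈ Finset.univ.filter (fun G : SimpleGraph (Fin (n + 2)) => G.Connected),
        (piFun n G : ℝ) * Ifun φ n G x) =
      ∑ H ∈ Finset.univ.filter (fun H : SimpleGraph (Fin (n + 2)) => H.Connected),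
        (kappaFun n H : ℝ) * Jfun φ n H x := by
  have h0 : ∀ y, 0 ≤ φ y := fun y => (hφrange y).1
  have h1 : ∀ y, φ y ≤ 1 := fun y => (hφrange y).2
  have step1 : ∀ G ∈ Finset.univ.filter (fun G : SimpleGraph (Fin (n + 2)) => G.Connected),
      (piFun n G : ℝ) * Ifun φ n G x =
      ∑ H ∈ Finset.univ.filter
          (fun H : SimpleGraph (Fin (n + 2)) => H.Connected ∧ G ≤ H),
        (piFun n G : ℝ) * ((-1 : ℝ) ^ (edgeCount H - edgeCount G) * Jfun φ n H x) := by
    intro G hG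
    have hGc : G.Connected := (Finset.mem_filter.mp hG).2
    rw [PKAux.Ifun_eq_sum φ hφmeas h0 h1 hφsymm hφint n G hGc x, Finset.mul_sum]
    refine Finset.sum_congr ?_ fun H _ => rfl
    ext H
    simp only [Finset.mem_filter, Finset.mem_univ, true_and]
    exact ⟨fun h => ⟨hGc.mono h, h⟩, fun h => h.2⟩
  have hcond : ∀ (G H : SimpleGraph (Fin (n + 2))),
      G ∈ Finset.univ.filter (fun G : SimpleGraph (Fin (n + 2)) => G.Connected) ∧
        H ∈ Finset.univ.filter
          (fun H : SimpleGraph (Fin (n + 2)) => H.Connected ∧ G ≤ H) ↔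
      G ∈ Finset.univ.filter
          (fun G : SimpleGraph (Fin (n + 2)) => G.Connected ∧ G ≤ H) ∧
        H ∈ Finset.univ.filter (fun H : SimpleGraph (Fin (n + 2)) => H.Connected) := by
    intro G H
    simp only [Finset.mem_filter, Finset.mem_univ, true_and]
    tauto
  calc ∑ G ∈ Finset.univ.filter (fun G : SimpleGraph (Fin (n + 2)) => G.Connected),
        (piFun n G : ℝ) * Ifun φ n G x
      = ∑ G ∈ Finset.univ.filter (fun G : SimpleGraph (Fin (n + 2)) => G.Connected),
          ∑ H ∈ Finset.univ.filter
            (fun H : SimpleGraph (Fin (n + 2)) => H.Connected ∧ G ≤ H),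
          (piFun n G : ℝ) * ((-1 : ℝ) ^ (edgeCount H - edgeCount G) * Jfun φ n H x) :=
        Finset.sum_congr rfl step1
    _ = ∑ H ∈ Finset.univ.filter (fun H : SimpleGraph (Fin (n + 2)) => H.Connected),
          ∑ G ∈ Finset.univ.filter
            (fun G : SimpleGraph (Fin (n + 2)) => G.Connected ∧ G ≤ H),
          (piFun n G : ℝ) * ((-1 : ℝ) ^ (edgeCount H - edgeCount G) * Jfun φ n H x) :=
        Finset.sum_comm' hcond
    _ = ∑ H ∈ Finset.univ.filter (fun H : SimpleGraph (Fin (n + 2)) => H.Connected),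
          (kappaFun n H : ℝ) * Jfun φ n H x := by
        refine Finset.sum_congr rfl fun H hH => ?_
        have hκ : ((kappaFun n H : ℤ) : ℝ) = ∑ G ∈ Finset.univ.filter
            (fun G : SimpleGraph (Fin (n + 2)) => G.Connected ∧ G ≤ H),
            (-1 : ℝ) ^ (edgeCount H - edgeCount G) * (piFun n G : ℝ) := by
          rw [kappaFun]
          push_cast
          rfl
        rw [hκ, Finset.sum_mul]
        exact Finset.sum_congr rfl fun G _ => by ring

end
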